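/- Let T > 0, B > 0, N > 0, c ≥ 0, n_1, …, n_K > 0, γ_1, …, γ_K > 0, and p_1, …, p_K ≥ 0, and define g(n) = (N + c√(nTB))/(nTB) and w_k* = (2^{g(n_k)} − 1)/γ_k. Suppose w_1, …, w_K ≥ 0 satisfy the bit constraints (log₂(1 + w_k γ_k) − c/√(n_k T B)) · n_k T B ≥ N for all k and the average power constraint Σ_{k=1}^K w_k p_k ≤ w̄. Then w_k* ≤ w_k for all k, the vector (w_1*, …, w_K*) satisfies all the bit constraints with equality, and Σ_{k=1}^K w_k* p_k ≤ w̄. -/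
import Mathlib


/-- The powers `w_k* = (2^{g(n_k)} − 1)/γ_k` meet all bit constraints with
equality, are dominated by any feasible powers, and hence satisfy the average
power constraint: the optimum of P0 keeps equality in the bit constraint (6). -/
theorem optimal_power_achieves_bit_constraint_equality
    (T B N c : ℝ) (hT : 0 < T) (hB : 0 < B) (hN : 0 < N) (hc : 0 ≤ c)
    (K : ℕ) (n γ p w : Fin K → ℝ) (wbar : ℝ)
    (hn : ∀ k, 0 < n k) (hγ : ∀ k, 0 < γ k) (hp : ∀ k, 0 ≤ p k)
    (hw : ∀ k, 0 ≤ w k)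
    (hbit : ∀ k,
      (Real.logb 2 (1 + w k * γ k) - c / Real.sqrt (n k * T * B)) *
        (n k * T * B) ≥ N)
    (hpow : ∑ k, w k * p k ≤ wbar) :
    (∀ k,
      ((2 : ℝ) ^ ((N + c * Real.sqrt (n k * T * B)) / (n k * T * B)) - 1) / γ k
        ≤ w k) ∧
    (∀ k,
      (Real.logb 2 (1 +
          (((2 : ℝ) ^ ((N + c * Real.sqrt (n k * T * B)) / (n k * T * B)) - 1)
            / γ k) * γ k) - c / Real.sqrt (n k * T * B)) * (n k * T * B) = N) ∧
    ∑ k, (((2 : ℝ) ^ ((N + c * Real.sqrt (n k * T * B)) / (n k * T * B)) - 1)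
        / γ k) * p k ≤ wbar := by
  have hM : ∀ k, 0 < n k * T * B := fun k => mul_pos (mul_pos (hn k) hT) hB
  have hs : ∀ k, 0 < Real.sqrt (n k * T * B) := fun k => Real.sqrt_pos.mpr (hM k)
  have hdom : ∀ k,
      ((2 : ℝ) ^ ((N + c * Real.sqrt (n k * T * B)) / (n k * T * B)) - 1) / γ k
        ≤ w k := by
    intro k
    have hM' := hM k
    have hb := hbit k
    have h1 : (N + c * Real.sqrt (n k * T * B)) / (n k * T * B)
        ≤ Real.logb 2 (1 + w k * γ k) := by
      rw [div_le_iff₀ hM']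
      have hcs : c / Real.sqrt (n k * T * B) * (n k * T * B)
          = c * Real.sqrt (n k * T * B) := by
        rw [div_mul_eq_mul_div, div_eq_iff (hs k).ne']
        nlinarith [Real.mul_self_sqrt hM'.le]
      nlinarith [hb, hcs]
    have h2 : (2:ℝ) ^ ((N + c * Real.sqrt (n k * T * B)) / (n k * T * B))
        ≤ 1 + w k * γ k := by
      have hpos : (0:ℝ) < 1 + w k * γ k := by
        have := mul_nonneg (hw k) (hγ k).le; linarith
      calc (2:ℝ) ^ ((N + c * Real.sqrt (n k * T * B)) / (n k * T * B))
          ≤ (2:ℝ) ^ Real.logb 2 (1 + w k * γ k) :=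
            Real.rpow_le_rpow_of_exponent_le one_le_two h1
        _ = 1 + w k * γ k := Real.rpow_logb two_pos (by norm_num) hpos
    rw [div_le_iff₀ (hγ k)]
    linarith
  refine ⟨hdom, fun k => ?_, ?_⟩
  · have hγk := hγ k
    have hM' := hM k
    have hsk := hs k
    have hE : (((2 : ℝ) ^ ((N + c * Real.sqrt (n k * T * B)) / (n k * T * B)) - 1)
            / γ k) * γ k
        = (2 : ℝ) ^ ((N + c * Real.sqrt (n k * T * B)) / (n k * T * B)) - 1 :=
      div_mul_cancel₀ _ hγk.ne'
    rw [hE]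
    have : (1:ℝ) + ((2 : ℝ) ^ ((N + c * Real.sqrt (n k * T * B)) / (n k * T * B)) - 1)
        = (2 : ℝ) ^ ((N + c * Real.sqrt (n k * T * B)) / (n k * T * B)) := by ring
    rw [this, Real.logb_rpow (by norm_num) (by norm_num)]
    have hcs : c / Real.sqrt (n k * T * B) * (n k * T * B)
        = c * Real.sqrt (n k * T * B) := by
      rw [div_mul_eq_mul_div, div_eq_iff hsk.ne']
      nlinarith [Real.mul_self_sqrt hM'.le]
    rw [sub_mul, div_mul_cancel₀ _ hM'.ne', hcs]
    ring
  · refine le_trans (Finset.sum_le_sum fun k _ => ?_) hpow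
    exact mul_le_mul_of_nonneg_right (hdom k) (hp k)
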